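/- Let (X,f) and (Y,g) be minimal compact systems. The following are equivalent: (1) (X,f) and (Y,g) are conjugate; (2) there exist x ∈ X and y ∈ Y such that for every sequence of integers (n_k), (f^{n_k}(x)) converges if and only if (g^{n_k}(y)) converges; (3) there exist x ∈ X and y ∈ Y such that the sequences (f^n(x))_{n∈ℕ} and (g^n(y))_{n∈ℕ} have the same topological type. -/

import Mathlib

open Filter Topology

section Defs

variable {X : Type*}

/-- The shift by `m`: `(shiftZ m z) n = z (n + m)`, so `shiftZ 1` is the left shift `S`
and `shiftZ m = S^m`. -/
def shiftZ (m : ℤ) (z : ℤ → X) : ℤ → X := fun n => z (n + m)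

/-- `Per_p(z)`: the set of positions `n` such that `z m = z n` for all `m ≡ n (mod p)`. -/
def PerSet (p : ℕ) (z : ℤ → X) : Set ℤ :=
  {n : ℤ | ∀ m : ℤ, (p : ℤ) ∣ m - n → z m = z n}

/-- `Per(z) = ⋃_{p ≥ 1} Per_p(z)`. -/
def PerFull (z : ℤ → X) : Set ℤ := {n : ℤ | ∃ p : ℕ, 1 ≤ p ∧ n ∈ PerSet p z}

/-- A Toeplitz sequence: every position is periodic. -/
def IsToeplitz (z : ℤ → X) : Prop := ∀ n : ℤ, n ∈ PerFull z

/-- A non-periodic sequence: `S^m z ≠ z` for all `m ≠ 0`. -/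
def NonPeriodicSeq (z : ℤ → X) : Prop := ∀ m : ℤ, m ≠ 0 → shiftZ m z ≠ z

/-- `u` and `v` have the same `p`-skeleton. -/
def SamePSkeleton (p : ℕ) (u v : ℤ → X) : Prop :=
  PerSet p u = PerSet p v ∧ ∀ n ∈ PerSet p u, u n = v n

/-- A period structure of a (non-periodic) Toeplitz sequence `z`. -/
def IsPeriodStructure (p : ℕ → ℕ) (z : ℤ → X) : Prop :=
  (∀ i, 1 ≤ p i) ∧
  (∀ i q, 1 ≤ q → q < p i → PerSet q z ≠ PerSet (p i) z) ∧
  (∀ i, p i ∣ p (i + 1)) ∧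
  (∀ n : ℤ, ∃ i, n ∈ PerSet (p i) z)

/-- A fast growing sequence of positive integers. -/
def FastGrowing (p : ℕ → ℕ) : Prop :=
  p 0 = 1 ∧ (∀ i, p i ∣ p (i + 1)) ∧ 3 ≤ p 1 ∧ ∀ i, 3 * p i ≤ p (i + 1)

/-- `oxDefined p i` is the set of positions of the Oxtoby sequence that are filled in
after step `i` of the inductive construction (step `i+1` fills, for each `k ≡ 0` or
`-1 (mod p_{i+1}/p_i)`, the still-empty positions `J(i,k)` of the block
`[k p_i, (k+1) p_i)`). -/
def oxDefined (p : ℕ → ℕ) : ℕ → Set ℤ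
  | 0 => ∅
  | i + 1 =>
      oxDefined p i ∪
        {n : ℤ | ∃ k : ℤ,
          (((p (i + 1) / p i : ℕ) : ℤ) ∣ k ∨ ((p (i + 1) / p i : ℕ) : ℤ) ∣ (k + 1)) ∧
          k * (p i : ℤ) ≤ n ∧ n < (k + 1) * (p i : ℤ) ∧ n ∉ oxDefined p i}

/-- `J(i,k)`: the set of positions in `[k p_i, (k+1) p_i)` still undefined after step `i`. -/
def oxJ (p : ℕ → ℕ) (i : ℕ) (k : ℤ) : Set ℤ :=
  {n : ℤ | k * (p i : ℤ) ≤ n ∧ n < (k + 1) * (p i : ℤ) ∧ n ∉ oxDefined p i}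

/-- The Oxtoby sequence `z((p_i),(x_i))`: position `n` receives the value `x_i` where `i`
is the first step after which `n` is defined. -/
noncomputable def oxtoby (p : ℕ → ℕ) (x : ℕ → X) : ℤ → X :=
  fun n => x (sInf {i : ℕ | n ∈ oxDefined p i})

/-- The reverse of a bi-infinite sequence: `x⁻¹(n) = x(-n)`. -/
def revSeq (z : ℤ → X) : ℤ → X := fun n => z (-n)

/-- `[n0, n1]` is a maximal `p`-periodic block in `x`. -/
def IsMaxPeriodicBlock (p : ℕ) (x : ℤ → X) (n0 n1 : ℤ) : Prop :=
  n0 ≤ n1 ∧ Set.Icc n0 n1 ⊆ PerSet p x ∧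
    ∀ n0' n1' : ℤ, n0' ≤ n0 → n1 ≤ n1' → Set.Icc n0' n1' ⊆ PerSet p x →
      n0' = n0 ∧ n1' = n1

variable [TopologicalSpace X]

/-- The orbit closure of `z` in `X^ℤ` with the product topology. -/
def orbitClosure (z : ℤ → X) : Set (ℤ → X) :=
  closure {y : ℤ → X | ∃ m : ℤ, y = shiftZ m z}

/-- The ω-limit set of a sequence: all limits of convergent subsequences. -/
def omegaLimitSet (x : ℕ → X) : Set X :=
  {a : X | ∃ φ : ℕ → ℕ, StrictMono φ ∧ Tendsto (x ∘ φ) atTop (𝓝 a)}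

/-- Two sequences have the same topological type if exactly the same subsequences
converge. -/
def SameTopType {Y : Type*} [TopologicalSpace Y] (x : ℕ → X) (y : ℕ → Y) : Prop :=
  ∀ φ : ℕ → ℕ, StrictMono φ →
    ((∃ a, Tendsto (x ∘ φ) atTop (𝓝 a)) ↔ (∃ a, Tendsto (y ∘ φ) atTop (𝓝 a)))

/-- `f` is a conjugacy between the shift-invariant sets `A` and `B`: a homeomorphism
from `A` onto `B` commuting with the shift. -/
def IsConjugacy (A B : Set (ℤ → X)) (f : (ℤ → X) → (ℤ → X)) : Prop :=
  Set.MapsTo f A B ∧ ContinuousOn f A ∧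
    (∃ g : (ℤ → X) → (ℤ → X), Set.MapsTo g B A ∧ ContinuousOn g B ∧
      (∀ a ∈ A, g (f a) = a) ∧ (∀ b ∈ B, f (g b) = b)) ∧
    ∀ a ∈ A, f (shiftZ 1 a) = shiftZ 1 (f a)

/-- The `m`-th iterate (for `m : ℤ`) of a self-homeomorphism. -/
def iterZ {Y : Type*} [TopologicalSpace Y] (f : Y ≃ₜ Y) (m : ℤ) (a : Y) : Y :=
  ((f.toEquiv ^ m : Equiv.Perm Y)) a

end Defs

section MyAux

lemma iterZ_zero {Y : Type*} [TopologicalSpace Y] (f : Y ≃ₜ Y) (a : Y) :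
    iterZ f 0 a = a := rfl

lemma iterZ_add_one {Y : Type*} [TopologicalSpace Y] (f : Y ≃ₜ Y) (m : ℤ) (a : Y) :
    iterZ f (m + 1) a = f (iterZ f m a) := by
  unfold iterZ
  rw [add_comm, zpow_add, zpow_one]
  rfl

lemma iterZ_sub_one {Y : Type*} [TopologicalSpace Y] (f : Y ≃ₜ Y) (m : ℤ) (a : Y) :
    iterZ f (m - 1) a = f.symm (iterZ f m a) := by
  have := iterZ_add_one f (m - 1) a
  rw [sub_add_cancel] at this
  rw [this]
  simp

lemma helper_squeeze {Z : Type*} [MetricSpace Z] {u v : ℕ → Z} {a : Z}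
    (hv : Tendsto v atTop (𝓝 a)) (h : ∀ j, dist (u j) (v j) < 1 / (j + 1)) :
    Tendsto u atTop (𝓝 a) := by
  rw [tendsto_iff_dist_tendsto_zero]
  have h0 : Tendsto (fun j : ℕ => 1 / ((j : ℝ) + 1) + dist (v j) a) atTop (𝓝 (0 + 0)) :=
    Tendsto.add tendsto_one_div_add_atTop_nhds_zero_nat
      (tendsto_iff_dist_tendsto_zero.1 hv)
  rw [add_zero] at h0
  refine squeeze_zero (fun j => dist_nonneg) (fun j => ?_) h0
  calc dist (u j) a ≤ dist (u j) (v j) + dist (v j) a := dist_triangle _ _ _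
    _ ≤ 1 / (j + 1) + dist (v j) a := by
        have := (h j).le
        push_cast
        linarith

lemma helper_sub {Z : Type*} [MetricSpace Z] {u : ℕ → Z} {b : Z} {φ ψ : ℕ → ℕ}
    (hφ : StrictMono φ) (h : Tendsto (fun i => u (φ i)) atTop (𝓝 b))
    (hψ : Tendsto ψ atTop atTop) (hr : ∀ j, ∃ i, ψ j = φ i) :
    Tendsto (fun j => u (ψ j)) atTop (𝓝 b) := by
  rw [Metric.tendsto_atTop] at h ⊢
  intro ε hε
  obtain ⟨N, hN⟩ := h ε hε
  obtain ⟨M, hM⟩ := (hψ.eventually (eventually_ge_atTop (φ N))).exists_forall_of_atTop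
  refine ⟨M, fun j hj => ?_⟩
  obtain ⟨i, hi⟩ := hr j
  have hNi : N ≤ i := by
    by_contra hc
    push_neg at hc
    have h2 := hφ hc
    have h3 := hM j hj
    rw [hi] at h3
    omega
  rw [hi]
  exact hN i hNi

lemma master {X Y : Type*} [MetricSpace X] [CompactSpace X] [MetricSpace Y] [CompactSpace Y]
    (R : X → Y → Prop)
    (hA : ∀ a, ∃ b, R a b)
    (hB : ∀ a b b', R a b → R a b' → b = b')
    (hCl : ∀ (u : ℕ → X) (v : ℕ → Y) (a : X) (c : Y), (∀ j, R (u j) (v j)) →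
      Tendsto u atTop (𝓝 a) → Tendsto v atTop (𝓝 c) → R a c) :
    ∃ h : X → Y, Continuous h ∧ ∀ a, R a (h a) := by
  choose h hR using hA
  refine ⟨h, ?_, hR⟩
  rw [continuous_iff_seqContinuous]
  intro u a hu
  apply tendsto_of_subseq_tendsto
  intro ns hns
  obtain ⟨c, ms, hms, hc⟩ := CompactSpace.tendsto_subseq (fun n => h (u (ns n)))
  refine ⟨ms, ?_⟩
  have hR' : R a c := by
    refine hCl (fun n => u (ns (ms n))) (fun n => h (u (ns (ms n)))) a c
      (fun j => hR _) ?_ hc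
    exact hu.comp (hns.comp hms.tendsto_atTop)
  have : c = h a := hB a c (h a) hR' (hR a)
  rw [← this]
  exact hc

lemma master2 {X Y : Type*} [MetricSpace X] [CompactSpace X] [MetricSpace Y] [CompactSpace Y]
    (f : X ≃ₜ X) (g : Y ≃ₜ Y) (R : X → Y → Prop)
    (hA : ∀ a, ∃ b, R a b) (hA' : ∀ b, ∃ a, R a b)
    (hB : ∀ a b b', R a b → R a b' → b = b')
    (hB' : ∀ a a' b, R a b → R a' b → a = a')
    (hCl : ∀ (u : ℕ → X) (v : ℕ → Y) (a : X) (c : Y), (∀ j, R (u j) (v j)) →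
      Tendsto u atTop (𝓝 a) → Tendsto v atTop (𝓝 c) → R a c)
    (hS : ∀ a b, R a b → R (f a) (g b)) :
    ∃ h : X ≃ₜ Y, ∀ a : X, h (f a) = g (h a) := by
  obtain ⟨h, hcont, hhR⟩ := master R hA hB hCl
  obtain ⟨h', hcont', hhR'⟩ := master (fun b a => R a b) hA'
    (fun b a a' => hB' a a' b) (fun u v a c h1 h2 h3 => hCl v u c a h1 h3 h2)
  have hleft : ∀ a, h' (h a) = a := fun a => hB' (h' (h a)) a (h a) (hhR' (h a)) (hhR a)
  have hright : ∀ b, h (h' b) = b := fun b => hB (h' b) (h (h' b)) b (hhR (h' b)) (hhR' b)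
  refine ⟨⟨⟨h, h', hleft, hright⟩, hcont, hcont'⟩, fun a => ?_⟩
  exact hB (f a) _ _ (hhR (f a)) (hS a (h a) (hhR a))

lemma cond2_to_conj {X Y : Type*} [MetricSpace X] [CompactSpace X] [MetricSpace Y]
    [CompactSpace Y] (f : X ≃ₜ X) (g : Y ≃ₜ Y)
    (hf : ∀ a : X, Dense (Set.range fun n : ℤ => iterZ f n a))
    (hg : ∀ b : Y, Dense (Set.range fun n : ℤ => iterZ g n b))
    (x : X) (y : Y)
    (hc : ∀ n : ℕ → ℤ, (∃ l, Tendsto (fun k => iterZ f (n k) x) atTop (𝓝 l)) ↔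
      (∃ l, Tendsto (fun k => iterZ g (n k) y) atTop (𝓝 l))) :
    ∃ h : X ≃ₜ Y, ∀ a : X, h (f a) = g (h a) := by
  set R : X → Y → Prop := fun a b => ∃ n : ℕ → ℤ,
    Tendsto (fun k => iterZ f (n k) x) atTop (𝓝 a) ∧
    Tendsto (fun k => iterZ g (n k) y) atTop (𝓝 b) with hRdef
  -- a sequence of integer powers converging to any given point
  have hdx : ∀ a : X, ∃ n : ℕ → ℤ, Tendsto (fun k => iterZ f (n k) x) atTop (𝓝 a) := by
    intro a
    have h1 : ∀ k : ℕ, ∃ m : ℤ, dist (iterZ f m x) a < 1 / (k + 1) := by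
      intro k
      have hr : (0:ℝ) < 1 / (k + 1) := by positivity
      obtain ⟨p, hp1, hp2⟩ := Metric.dense_iff.1 (hf x) a _ hr
      obtain ⟨m, hm⟩ := hp2
      exact ⟨m, by simp only [] at hm; rw [hm]; rwa [Metric.mem_ball] at hp1⟩
    choose n hn using h1
    exact ⟨n, helper_squeeze tendsto_const_nhds hn⟩
  have hdy : ∀ b : Y, ∃ n : ℕ → ℤ, Tendsto (fun k => iterZ g (n k) y) atTop (𝓝 b) := by
    intro b
    have h1 : ∀ k : ℕ, ∃ m : ℤ, dist (iterZ g m y) b < 1 / (k + 1) := by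
      intro k
      have hr : (0:ℝ) < 1 / (k + 1) := by positivity
      obtain ⟨p, hp1, hp2⟩ := Metric.dense_iff.1 (hg y) b _ hr
      obtain ⟨m, hm⟩ := hp2
      exact ⟨m, by simp only [] at hm; rw [hm]; rwa [Metric.mem_ball] at hp1⟩
    choose n hn using h1
    exact ⟨n, helper_squeeze tendsto_const_nhds hn⟩
  have h2k : Tendsto (fun k : ℕ => 2 * k) atTop atTop :=
    tendsto_atTop_mono (fun k => by simp only [id_eq]; omega) (tendsto_id (α := ℕ))
  have h2k1 : Tendsto (fun k : ℕ => 2 * k + 1) atTop atTop :=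
    tendsto_atTop_mono (fun k => by simp only [id_eq]; omega) (tendsto_id (α := ℕ))
  have hB : ∀ a b b', R a b → R a b' → b = b' := by
    rintro a b b' ⟨n, hna, hnb⟩ ⟨n', hn'a, hn'b⟩
    set m : ℕ → ℤ := fun j => if j % 2 = 0 then n (j / 2) else n' (j / 2) with hm
    have hma : Tendsto (fun k => iterZ f (m k) x) atTop (𝓝 a) := by
      rw [Metric.tendsto_atTop] at hna hn'a ⊢
      intro ε hε
      obtain ⟨N1, hN1⟩ := hna ε hε
      obtain ⟨N2, hN2⟩ := hn'a ε hε
      refine ⟨2 * (max N1 N2) + 2, fun j hj => ?_⟩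
      rcases Nat.mod_two_eq_zero_or_one j with h | h
      · rw [show m j = n (j / 2) by rw [hm]; simp [h]]
        exact hN1 (j / 2) (by omega)
      · rw [show m j = n' (j / 2) by rw [hm]; simp [h]]
        exact hN2 (j / 2) (by omega)
    obtain ⟨L, hL⟩ := (hc m).1 ⟨a, hma⟩
    have hev : Tendsto (fun k => iterZ g (m (2 * k)) y) atTop (𝓝 L) := hL.comp h2k
    have hod : Tendsto (fun k => iterZ g (m (2 * k + 1)) y) atTop (𝓝 L) := hL.comp h2k1
    have e1 : ∀ k, m (2 * k) = n k := by
      intro k; rw [hm]; simp only []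
      rw [if_pos (by omega)]; congr 1; omega
    have e2 : ∀ k, m (2 * k + 1) = n' k := by
      intro k; rw [hm]; simp only []
      rw [if_neg (by omega)]; congr 1; omega
    simp only [e1] at hev
    simp only [e2] at hod
    rw [tendsto_nhds_unique hnb hev, tendsto_nhds_unique hn'b hod]
  have hB' : ∀ a a' b, R a b → R a' b → a = a' := by
    rintro a a' b ⟨n, hna, hnb⟩ ⟨n', hn'a, hn'b⟩
    set m : ℕ → ℤ := fun j => if j % 2 = 0 then n (j / 2) else n' (j / 2) with hm
    have hmb : Tendsto (fun k => iterZ g (m k) y) atTop (𝓝 b) := by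
      rw [Metric.tendsto_atTop] at hnb hn'b ⊢
      intro ε hε
      obtain ⟨N1, hN1⟩ := hnb ε hε
      obtain ⟨N2, hN2⟩ := hn'b ε hε
      refine ⟨2 * (max N1 N2) + 2, fun j hj => ?_⟩
      rcases Nat.mod_two_eq_zero_or_one j with h | h
      · rw [show m j = n (j / 2) by rw [hm]; simp [h]]
        exact hN1 (j / 2) (by omega)
      · rw [show m j = n' (j / 2) by rw [hm]; simp [h]]
        exact hN2 (j / 2) (by omega)
    obtain ⟨L, hL⟩ := (hc m).2 ⟨b, hmb⟩
    have hev : Tendsto (fun k => iterZ f (m (2 * k)) x) atTop (𝓝 L) := hL.comp h2k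
    have hod : Tendsto (fun k => iterZ f (m (2 * k + 1)) x) atTop (𝓝 L) := hL.comp h2k1
    have e1 : ∀ k, m (2 * k) = n k := by
      intro k; rw [hm]; simp only []
      rw [if_pos (by omega)]; congr 1; omega
    have e2 : ∀ k, m (2 * k + 1) = n' k := by
      intro k; rw [hm]; simp only []
      rw [if_neg (by omega)]; congr 1; omega
    simp only [e1] at hev
    simp only [e2] at hod
    rw [tendsto_nhds_unique hna hev, tendsto_nhds_unique hn'a hod]
  have hCl : ∀ (u : ℕ → X) (v : ℕ → Y) (a : X) (c : Y), (∀ j, R (u j) (v j)) →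
      Tendsto u atTop (𝓝 a) → Tendsto v atTop (𝓝 c) → R a c := by
    intro u v a c hR hu hv
    have hsel : ∀ j : ℕ, ∃ m : ℤ, dist (iterZ f m x) (u j) < 1 / (j + 1) ∧
        dist (iterZ g m y) (v j) < 1 / (j + 1) := by
      intro j
      obtain ⟨n, hn1, hn2⟩ := hR j
      have hr : (0:ℝ) < 1 / (j + 1) := by positivity
      obtain ⟨N1, hN1⟩ := Metric.tendsto_atTop.1 hn1 _ hr
      obtain ⟨N2, hN2⟩ := Metric.tendsto_atTop.1 hn2 _ hr
      exact ⟨n (max N1 N2), hN1 _ (le_max_left _ _), hN2 _ (le_max_right _ _)⟩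
    choose m hm1 hm2 using hsel
    exact ⟨m, helper_squeeze hu hm1, helper_squeeze hv hm2⟩
  have hS : ∀ a b, R a b → R (f a) (g b) := by
    rintro a b ⟨n, h1, h2⟩
    refine ⟨fun k => n k + 1, ?_, ?_⟩
    · have := (f.continuous.tendsto a).comp h1
      simpa [Function.comp_def, iterZ_add_one] using this
    · have := (g.continuous.tendsto b).comp h2
      simpa [Function.comp_def, iterZ_add_one] using this
  refine master2 f g R ?_ ?_ hB hB' hCl hS
  · intro a
    obtain ⟨n, hn⟩ := hdx a
    obtain ⟨l, hl⟩ := (hc n).1 ⟨a, hn⟩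
    exact ⟨l, n, hn, hl⟩
  · intro b
    obtain ⟨n, hn⟩ := hdy b
    obtain ⟨l, hl⟩ := (hc n).2 ⟨b, hn⟩
    exact ⟨l, n, hl, hn⟩

lemma min_omega {X : Type*} [MetricSpace X] [CompactSpace X] (f : X ≃ₜ X)
    (hf : ∀ a : X, Dense (Set.range fun n : ℤ => iterZ f n a)) (x a : X) :
    ∃ φ : ℕ → ℕ, StrictMono φ ∧ Tendsto (fun k => iterZ f (φ k : ℤ) x) atTop (𝓝 a) := by
  obtain ⟨b, ψ, hψ, hb⟩ := CompactSpace.tendsto_subseq (fun k : ℕ => iterZ f (k : ℤ) x)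
  have hinv : ∀ m : ℤ, ∃ ψ' : ℕ → ℕ, StrictMono ψ' ∧
      Tendsto (fun k => iterZ f (ψ' k : ℤ) x) atTop (𝓝 (iterZ f m b)) := by
    intro m
    induction m using Int.induction_on with
    | zero => exact ⟨ψ, hψ, hb⟩
    | succ i ih =>
      obtain ⟨ψ', hm, ht⟩ := ih
      refine ⟨fun k => ψ' k + 1, fun p q hpq => ?_, ?_⟩
      · show ψ' p + 1 < ψ' q + 1
        have := hm hpq; omega
      · have h1 := (f.continuous.tendsto _).comp ht
        have he : (fun k => iterZ f (((ψ' k + 1 : ℕ)) : ℤ) x)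
            = (⇑f ∘ fun k => iterZ f (↑(ψ' k)) x) := by
          funext k
          show iterZ f (((ψ' k + 1 : ℕ)) : ℤ) x = f (iterZ f (↑(ψ' k)) x)
          push_cast
          rw [iterZ_add_one]
        show Tendsto (fun k => iterZ f (((ψ' k + 1 : ℕ)) : ℤ) x) atTop (𝓝 (iterZ f (↑i + 1) b))
        rw [he, show iterZ f ((i:ℤ) + 1) b = f (iterZ f (↑i) b) from iterZ_add_one ..]
        exact h1
    | pred i ih =>
      obtain ⟨ψ', hm, ht⟩ := ih
      have hge : ∀ k, k ≤ ψ' k := fun k => hm.le_apply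
      refine ⟨fun k => ψ' (k + 1) - 1, fun p q hpq => ?_, ?_⟩
      · show ψ' (p + 1) - 1 < ψ' (q + 1) - 1
        have h1 := hm (show p + 1 < q + 1 by omega)
        have h2 := hge (p + 1)
        omega
      · have h1 := (f.symm.continuous.tendsto _).comp (ht.comp (tendsto_add_atTop_nat 1))
        have he : (fun k => iterZ f (((ψ' (k + 1) - 1 : ℕ)) : ℤ) x)
            = (⇑f.symm ∘ ((fun k => iterZ f (↑(ψ' k)) x) ∘ fun k => k + 1)) := by
          funext k
          show iterZ f (((ψ' (k + 1) - 1 : ℕ)) : ℤ) x = f.symm (iterZ f (↑(ψ' (k + 1))) x)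
          have h2 : 1 ≤ ψ' (k + 1) := le_trans (by omega) (hge (k + 1))
          rw [show (((ψ' (k + 1) - 1 : ℕ)) : ℤ) = (ψ' (k + 1) : ℤ) - 1 by
            push_cast [h2]; ring, iterZ_sub_one]
        show Tendsto (fun k => iterZ f (((ψ' (k + 1) - 1 : ℕ)) : ℤ) x) atTop
          (𝓝 (iterZ f (-↑i - 1) b))
        rw [he, show iterZ f (-(i:ℤ) - 1) b = f.symm (iterZ f (-(i:ℤ)) b) from iterZ_sub_one ..]
        exact h1
  have hfreq : ∀ ε : ℝ, 0 < ε → ∃ᶠ k : ℕ in atTop, dist (iterZ f (k : ℤ) x) a < ε := by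
    intro ε hε
    obtain ⟨p, hp1, m, hm⟩ := Metric.dense_iff.1 (hf b) a (ε / 2) (by positivity)
    simp only [] at hm
    obtain ⟨ψ', hm', ht⟩ := hinv m
    rw [frequently_atTop]
    intro N
    obtain ⟨M, hM⟩ := Metric.tendsto_atTop.1 ht (ε / 2) (by positivity)
    refine ⟨ψ' (max M N), le_trans (le_max_right _ _) hm'.le_apply, ?_⟩
    have h1 := hM (max M N) (le_max_left _ _)
    rw [Metric.mem_ball] at hp1
    rw [← hm] at hp1
    calc dist (iterZ f (ψ' (max M N) : ℤ) x) a
        ≤ dist (iterZ f (ψ' (max M N) : ℤ) x) (iterZ f m b) + dist (iterZ f m b) a :=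
          dist_triangle _ _ _
      _ < ε / 2 + ε / 2 := add_lt_add h1 hp1
      _ = ε := by ring
  obtain ⟨φ, hφ, hP⟩ := extraction_forall_of_frequently
    (P := fun n k => dist (iterZ f (k : ℤ) x) a < 1 / (n + 1))
    (fun n => hfreq (1 / (n + 1)) (by positivity))
  exact ⟨φ, hφ, helper_squeeze tendsto_const_nhds hP⟩

lemma cond3_to_conj {X Y : Type*} [MetricSpace X] [CompactSpace X] [MetricSpace Y]
    [CompactSpace Y] (f : X ≃ₜ X) (g : Y ≃ₜ Y)
    (hf : ∀ a : X, Dense (Set.range fun n : ℤ => iterZ f n a))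
    (hg : ∀ b : Y, Dense (Set.range fun n : ℤ => iterZ g n b))
    (x : X) (y : Y)
    (hc : SameTopType (fun n : ℕ => iterZ f (n : ℤ) x) (fun n : ℕ => iterZ g (n : ℤ) y)) :
    ∃ h : X ≃ₜ Y, ∀ a : X, h (f a) = g (h a) := by
  have hc' : ∀ φ : ℕ → ℕ, StrictMono φ →
      ((∃ a, Tendsto (fun k => iterZ f (φ k : ℤ) x) atTop (𝓝 a)) ↔
        (∃ b, Tendsto (fun k => iterZ g (φ k : ℤ) y) atTop (𝓝 b))) := fun φ hφ => hc φ hφ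
  set R : X → Y → Prop := fun a b => ∃ φ : ℕ → ℕ, StrictMono φ ∧
    Tendsto (fun k => iterZ f (φ k : ℤ) x) atTop (𝓝 a) ∧
    Tendsto (fun k => iterZ g (φ k : ℤ) y) atTop (𝓝 b) with hRdef
  have h2k : Tendsto (fun k : ℕ => 2 * k) atTop atTop :=
    tendsto_atTop_mono (fun k => by simp only [id_eq]; omega) (tendsto_id (α := ℕ))
  have h2k1 : Tendsto (fun k : ℕ => 2 * k + 1) atTop atTop :=
    tendsto_atTop_mono (fun k => by simp only [id_eq]; omega) (tendsto_id (α := ℕ))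
  have hB : ∀ a b b', R a b → R a b' → b = b' := by
    rintro a b b' ⟨φ, hφ, hfa, hgb⟩ ⟨φ', hφ', hfa', hgb'⟩
    have hfr : ∀ j : ℕ, ∃ᶠ k : ℕ in atTop, dist (iterZ f (k : ℤ) x) a < 1 / (j + 1) ∧
        (j % 2 = 0 → ∃ i, k = φ i) ∧ (j % 2 = 1 → ∃ i, k = φ' i) := by
      intro j
      rw [frequently_atTop]
      intro N
      rcases Nat.mod_two_eq_zero_or_one j with hj | hj
      · obtain ⟨M, hM⟩ := Metric.tendsto_atTop.1 hfa (1 / (j + 1)) (by positivity)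
        exact ⟨φ (max M N), le_trans (le_max_right _ _) hφ.le_apply,
          hM _ (le_max_left _ _), fun _ => ⟨_, rfl⟩, fun hh => absurd hj (by omega)⟩
      · obtain ⟨M, hM⟩ := Metric.tendsto_atTop.1 hfa' (1 / (j + 1)) (by positivity)
        exact ⟨φ' (max M N), le_trans (le_max_right _ _) hφ'.le_apply,
          hM _ (le_max_left _ _), fun hh => absurd hj (by omega), fun _ => ⟨_, rfl⟩⟩
    obtain ⟨χ, hχ, hP⟩ := extraction_forall_of_frequently hfr
    have hfx : Tendsto (fun k => iterZ f (χ k : ℤ) x) atTop (𝓝 a) :=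
      helper_squeeze tendsto_const_nhds (fun j => (hP j).1)
    obtain ⟨L, hL⟩ := (hc' χ hχ).1 ⟨a, hfx⟩
    have hev : Tendsto (fun j => iterZ g ((χ (2 * j) : ℕ) : ℤ) y) atTop (𝓝 b) := by
      refine helper_sub (u := fun k : ℕ => iterZ g (k : ℤ) y) hφ hgb ?_
        (fun j => (hP (2 * j)).2.1 (by omega))
      exact tendsto_atTop_mono
        (fun j => by simp only [id_eq]; exact le_trans (by omega) hχ.le_apply)
        (tendsto_id (α := ℕ))
    have hod : Tendsto (fun j => iterZ g ((χ (2 * j + 1) : ℕ) : ℤ) y) atTop (𝓝 b') := by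
      refine helper_sub (u := fun k : ℕ => iterZ g (k : ℤ) y) hφ' hgb' ?_
        (fun j => (hP (2 * j + 1)).2.2 (by omega))
      exact tendsto_atTop_mono
        (fun j => by simp only [id_eq]; exact le_trans (by omega) hχ.le_apply)
        (tendsto_id (α := ℕ))
    have hev2 : Tendsto (fun j => iterZ g ((χ (2 * j) : ℕ) : ℤ) y) atTop (𝓝 L) := hL.comp h2k
    have hod2 : Tendsto (fun j => iterZ g ((χ (2 * j + 1) : ℕ) : ℤ) y) atTop (𝓝 L) :=
      hL.comp h2k1
    rw [tendsto_nhds_unique hev hev2, tendsto_nhds_unique hod hod2]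
  have hB' : ∀ a a' b, R a b → R a' b → a = a' := by
    rintro a a' b ⟨φ, hφ, hfa, hgb⟩ ⟨φ', hφ', hfa', hgb'⟩
    have hfr : ∀ j : ℕ, ∃ᶠ k : ℕ in atTop, dist (iterZ g (k : ℤ) y) b < 1 / (j + 1) ∧
        (j % 2 = 0 → ∃ i, k = φ i) ∧ (j % 2 = 1 → ∃ i, k = φ' i) := by
      intro j
      rw [frequently_atTop]
      intro N
      rcases Nat.mod_two_eq_zero_or_one j with hj | hj
      · obtain ⟨M, hM⟩ := Metric.tendsto_atTop.1 hgb (1 / (j + 1)) (by positivity)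
        exact ⟨φ (max M N), le_trans (le_max_right _ _) hφ.le_apply,
          hM _ (le_max_left _ _), fun _ => ⟨_, rfl⟩, fun hh => absurd hj (by omega)⟩
      · obtain ⟨M, hM⟩ := Metric.tendsto_atTop.1 hgb' (1 / (j + 1)) (by positivity)
        exact ⟨φ' (max M N), le_trans (le_max_right _ _) hφ'.le_apply,
          hM _ (le_max_left _ _), fun hh => absurd hj (by omega), fun _ => ⟨_, rfl⟩⟩
    obtain ⟨χ, hχ, hP⟩ := extraction_forall_of_frequently hfr
    have hgy : Tendsto (fun k => iterZ g (χ k : ℤ) y) atTop (𝓝 b) :=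
      helper_squeeze tendsto_const_nhds (fun j => (hP j).1)
    obtain ⟨L, hL⟩ := (hc' χ hχ).2 ⟨b, hgy⟩
    have hev : Tendsto (fun j => iterZ f ((χ (2 * j) : ℕ) : ℤ) x) atTop (𝓝 a) := by
      refine helper_sub (u := fun k : ℕ => iterZ f (k : ℤ) x) hφ hfa ?_
        (fun j => (hP (2 * j)).2.1 (by omega))
      exact tendsto_atTop_mono
        (fun j => by simp only [id_eq]; exact le_trans (by omega) hχ.le_apply)
        (tendsto_id (α := ℕ))
    have hod : Tendsto (fun j => iterZ f ((χ (2 * j + 1) : ℕ) : ℤ) x) atTop (𝓝 a') := by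
      refine helper_sub (u := fun k : ℕ => iterZ f (k : ℤ) x) hφ' hfa' ?_
        (fun j => (hP (2 * j + 1)).2.2 (by omega))
      exact tendsto_atTop_mono
        (fun j => by simp only [id_eq]; exact le_trans (by omega) hχ.le_apply)
        (tendsto_id (α := ℕ))
    have hev2 : Tendsto (fun j => iterZ f ((χ (2 * j) : ℕ) : ℤ) x) atTop (𝓝 L) := hL.comp h2k
    have hod2 : Tendsto (fun j => iterZ f ((χ (2 * j + 1) : ℕ) : ℤ) x) atTop (𝓝 L) :=
      hL.comp h2k1
    rw [tendsto_nhds_unique hev hev2, tendsto_nhds_unique hod hod2]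
  have hCl : ∀ (u : ℕ → X) (v : ℕ → Y) (a : X) (c : Y), (∀ j, R (u j) (v j)) →
      Tendsto u atTop (𝓝 a) → Tendsto v atTop (𝓝 c) → R a c := by
    intro u v a c hR hu hv
    have hfr : ∀ j : ℕ, ∃ᶠ k : ℕ in atTop, dist (iterZ f (k : ℤ) x) (u j) < 1 / (j + 1) ∧
        dist (iterZ g (k : ℤ) y) (v j) < 1 / (j + 1) := by
      intro j
      obtain ⟨φ, hφ, h1, h2⟩ := hR j
      rw [frequently_atTop]
      intro N
      obtain ⟨M1, hM1⟩ := Metric.tendsto_atTop.1 h1 (1 / (j + 1)) (by positivity)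
      obtain ⟨M2, hM2⟩ := Metric.tendsto_atTop.1 h2 (1 / (j + 1)) (by positivity)
      refine ⟨φ (max (max M1 M2) N), le_trans (le_max_right _ _) hφ.le_apply, ?_, ?_⟩
      · exact hM1 _ (le_trans (le_max_left _ _) (le_max_left _ _))
      · exact hM2 _ (le_trans (le_max_right _ _) (le_max_left _ _))
    obtain ⟨χ, hχ, hP⟩ := extraction_forall_of_frequently hfr
    exact ⟨χ, hχ, helper_squeeze hu (fun j => (hP j).1),
      helper_squeeze hv (fun j => (hP j).2)⟩
  have hS : ∀ a b, R a b → R (f a) (g b) := by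
    rintro a b ⟨φ, hφ, h1, h2⟩
    refine ⟨fun k => φ k + 1, fun p q hpq => by
      show φ p + 1 < φ q + 1
      have := hφ hpq; omega, ?_, ?_⟩
    · have := (f.continuous.tendsto a).comp h1
      simpa [Function.comp_def, Nat.cast_add, Nat.cast_one, iterZ_add_one] using this
    · have := (g.continuous.tendsto b).comp h2
      simpa [Function.comp_def, Nat.cast_add, Nat.cast_one, iterZ_add_one] using this
  refine master2 f g R ?_ ?_ hB hB' hCl hS
  · intro a
    obtain ⟨φ, hφ, hφa⟩ := min_omega f hf x a
    obtain ⟨l, hl⟩ := (hc' φ hφ).1 ⟨a, hφa⟩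
    exact ⟨l, φ, hφ, hφa, hl⟩
  · intro b
    obtain ⟨φ, hφ, hφb⟩ := min_omega g hg y b
    obtain ⟨l, hl⟩ := (hc' φ hφ).2 ⟨b, hφb⟩
    exact ⟨l, φ, hφ, hl, hφb⟩

lemma conj_iter {X Y : Type*} [TopologicalSpace X] [TopologicalSpace Y]
    (f : X ≃ₜ X) (g : Y ≃ₜ Y) (h : X ≃ₜ Y)
    (hh : ∀ a, h (f a) = g (h a)) : ∀ (m : ℤ) (a : X), h (iterZ f m a) = iterZ g m (h a) := by
  have hh' : ∀ a, h (f.symm a) = g.symm (h a) := by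
    intro a
    have h1 := hh (f.symm a)
    rw [f.apply_symm_apply] at h1
    rw [h1, g.symm_apply_apply]
  intro m
  induction m using Int.induction_on with
  | zero => intro a; rw [iterZ_zero, iterZ_zero]
  | succ i ih => intro a; rw [iterZ_add_one, iterZ_add_one, hh, ih]
  | pred i ih =>
    intro a
    rw [show -(i : ℤ) - 1 = -(i : ℤ) - 1 from rfl, iterZ_sub_one, iterZ_sub_one, hh', ih]


end MyAux

/-- Lemma `min2`: minimal compact systems `(X,f)` and `(Y,g)` are conjugate
iff (2) there are points `x, y` with the same convergence behaviour along all integer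
sequences, iff (3) there are points whose forward orbits have the same topological
type. -/
theorem min_conjugacy_iff {X Y : Type*}
    [MetricSpace X] [CompactSpace X] [Nonempty X] [MetricSpace Y] [CompactSpace Y]
    [Nonempty Y]
    (f : X ≃ₜ X) (g : Y ≃ₜ Y)
    (hf : ∀ a : X, Dense (Set.range fun n : ℤ => iterZ f n a))
    (hg : ∀ b : Y, Dense (Set.range fun n : ℤ => iterZ g n b)) :
    ((∃ h : X ≃ₜ Y, ∀ a : X, h (f a) = g (h a)) ↔
      (∃ x : X, ∃ y : Y, ∀ n : ℕ → ℤ,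
        (∃ l, Tendsto (fun k => iterZ f (n k) x) atTop (𝓝 l)) ↔
          (∃ l, Tendsto (fun k => iterZ g (n k) y) atTop (𝓝 l)))) ∧
    ((∃ h : X ≃ₜ Y, ∀ a : X, h (f a) = g (h a)) ↔
      (∃ x : X, ∃ y : Y,
        SameTopType (fun n : ℕ => iterZ f (n : ℤ) x) (fun n : ℕ => iterZ g (n : ℤ) y))) := by
  constructor
  · constructor
    · rintro ⟨h, hh⟩
      have key := conj_iter f g h hh
      obtain ⟨x⟩ := ‹Nonempty X›
      have e : ∀ m : ℤ, h.symm (iterZ g m (h x)) = iterZ f m x := fun m => by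
        rw [← key m x, h.symm_apply_apply]
      refine ⟨x, h x, fun n => ⟨?_, ?_⟩⟩
      · rintro ⟨l, hl⟩
        refine ⟨h l, ?_⟩
        have h2 := (h.continuous.tendsto l).comp hl
        have e2 : (⇑h ∘ fun k => iterZ f (n k) x) = fun k => iterZ g (n k) (h x) := by
          funext k; simp [Function.comp, key]
        rwa [e2] at h2
      · rintro ⟨l, hl⟩
        refine ⟨h.symm l, ?_⟩
        have h2 := (h.symm.continuous.tendsto l).comp hl
        have e2 : (⇑h.symm ∘ fun k => iterZ g (n k) (h x)) = fun k => iterZ f (n k) x := by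
          funext k; simp [Function.comp, e]
        rwa [e2] at h2
    · rintro ⟨x, y, hxy⟩
      exact cond2_to_conj f g hf hg x y hxy
  · constructor
    · rintro ⟨h, hh⟩
      have key := conj_iter f g h hh
      obtain ⟨x⟩ := ‹Nonempty X›
      have e : ∀ m : ℤ, h.symm (iterZ g m (h x)) = iterZ f m x := fun m => by
        rw [← key m x, h.symm_apply_apply]
      refine ⟨x, h x, fun φ hφ => ⟨?_, ?_⟩⟩
      · rintro ⟨l, hl⟩
        refine ⟨h l, ?_⟩
        have h2 := (h.continuous.tendsto l).comp hl
        have e2 : (⇑h ∘ (fun n : ℕ => iterZ f (n : ℤ) x) ∘ φ)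
            = ((fun n : ℕ => iterZ g (n : ℤ) (h x)) ∘ φ) := by
          funext k; simp [Function.comp, key]
        rwa [e2] at h2
      · rintro ⟨l, hl⟩
        refine ⟨h.symm l, ?_⟩
        have h2 := (h.symm.continuous.tendsto l).comp hl
        have e2 : (⇑h.symm ∘ (fun n : ℕ => iterZ g (n : ℤ) (h x)) ∘ φ)
            = ((fun n : ℕ => iterZ f (n : ℤ) x) ∘ φ) := by
          funext k; simp [Function.comp, e]
        rwa [e2] at h2
    · rintro ⟨x, y, hxy⟩
      exact cond3_to_conj f g hf hg x y hxy
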